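/- Let β ∈ ℝ^M with 0 ≤ β i < 1 for all i and at least one β i > 0, and let S = ∑ i, β i ^ 2 / (1 - β i ^ 2). For any x ∈ ℝ^M with x ≠ 0, define R(x) = (βᵀ x)^2 / (xᵀ A_β x), where A_β = β βᵀ + diag(1 - β i ^ 2). Then R(x) ≤ S/(S+1) for all x ≠ 0, with equality when x i = β i / (1 - β i ^ 2). -/

import Mathlib

open Matrix

lemma quad_form_eq (M : ℕ) (β d x : Fin M → ℝ) :
    x ⬝ᵥ (Matrix.vecMulVec β β + Matrix.diagonal d).mulVec x
      = (β ⬝ᵥ x)^2 + ∑ i, d i * x i ^ 2 := by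
  simp only [dotProduct, mulVec, Matrix.add_apply, vecMulVec_apply, diagonal_apply,
    add_mul, ite_mul, zero_mul, mul_add, Finset.sum_add_distrib, Finset.mul_sum,
    mul_ite, mul_zero]
  congr 1
  · rw [sq, Finset.sum_mul]
    refine Finset.sum_congr rfl fun i _ => ?_
    rw [Finset.mul_sum]
    exact Finset.sum_congr rfl fun j _ => by ring
  · refine Finset.sum_congr rfl fun i _ => ?_
    rw [Finset.sum_ite_eq]
    simp; ring

theorem stmt_5 (M : ℕ) (β : Fin M → ℝ)
    (hβ : ∀ i, 0 ≤ β i ∧ β i < 1) (hpos : ∃ i, 0 < β i)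
    (S : ℝ) (hS : S = ∑ i, β i ^ 2 / (1 - β i ^ 2)) :
    (∀ x : Fin M → ℝ, x ≠ 0 →
      (β ⬝ᵥ x) ^ 2 /
        (x ⬝ᵥ (Matrix.vecMulVec β β +
          Matrix.diagonal (fun i => 1 - β i ^ 2)).mulVec x) ≤ S / (S + 1)) ∧
    ((β ⬝ᵥ (fun i => β i / (1 - β i ^ 2))) ^ 2 /
        ((fun i => β i / (1 - β i ^ 2)) ⬝ᵥ (Matrix.vecMulVec β β +
          Matrix.diagonal (fun i => 1 - β i ^ 2)).mulVec
            (fun i => β i / (1 - β i ^ 2))) = S / (S + 1)) := by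
  set d : Fin M → ℝ := fun i => 1 - β i ^ 2 with hd
  have hd_pos : ∀ i, 0 < d i := by
    intro i
    have h1 := (hβ i).1
    have h2 := (hβ i).2
    have : β i ^ 2 < 1 := by nlinarith
    show 0 < 1 - β i ^ 2; nlinarith
  have hS_pos : 0 < S := by
    obtain ⟨i, hi⟩ := hpos
    rw [hS]
    apply Finset.sum_pos' (fun j _ => div_nonneg (sq_nonneg _) (le_of_lt (hd_pos j)))
    exact ⟨i, Finset.mem_univ i, div_pos (by positivity) (hd_pos i)⟩
  have hS1_pos : 0 < S + 1 := by linarith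
  constructor
  · intro x hx
    rw [quad_form_eq]
    set t : ℝ := β ⬝ᵥ x with ht
    set Q : ℝ := ∑ i, d i * x i ^ 2 with hQ
    have hQ_pos : 0 < Q := by
      have hne : ∃ i, x i ≠ 0 := by
        by_contra h
        push_neg at h
        exact hx (funext h)
      obtain ⟨i, hi⟩ := hne
      apply Finset.sum_pos' (fun j _ => mul_nonneg (le_of_lt (hd_pos j)) (sq_nonneg _))
      exact ⟨i, Finset.mem_univ i, mul_pos (hd_pos i) (by positivity)⟩
    have hCS : t ^ 2 ≤ S * Q := by
      have := Finset.sum_mul_sq_le_sq_mul_sq Finset.univ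
        (fun i => β i / Real.sqrt (d i)) (fun i => Real.sqrt (d i) * x i)
      have heq : ∀ i : Fin M, β i / Real.sqrt (d i) * (Real.sqrt (d i) * x i) = β i * x i := by
        intro i
        have h0 : Real.sqrt (d i) ≠ 0 := ne_of_gt (Real.sqrt_pos.2 (hd_pos i))
        field_simp
      have heq2 : ∀ i : Fin M, (β i / Real.sqrt (d i)) ^ 2 = β i ^ 2 / d i := by
        intro i
        rw [div_pow, Real.sq_sqrt (le_of_lt (hd_pos i))]
      have heq3 : ∀ i : Fin M, (Real.sqrt (d i) * x i) ^ 2 = d i * x i ^ 2 := by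
        intro i
        rw [mul_pow, Real.sq_sqrt (le_of_lt (hd_pos i))]
      simp only [Finset.sum_congr rfl (fun i _ => heq i),
        Finset.sum_congr rfl (fun i _ => heq2 i),
        Finset.sum_congr rfl (fun i _ => heq3 i)] at this
      calc t ^ 2 = (∑ i, β i * x i) ^ 2 := by rw [ht]; rfl
        _ ≤ (∑ i, β i ^ 2 / d i) * ∑ i, d i * x i ^ 2 := this
        _ = S * Q := by rw [hS, hQ]
    rw [div_le_div_iff₀ (by nlinarith) hS1_pos]
    nlinarith
  · have hdot : β ⬝ᵥ (fun i => β i / d i) = S := by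
      rw [hS]; simp only [dotProduct]
      exact Finset.sum_congr rfl fun i _ => by rw [sq]; ring
    rw [quad_form_eq, hdot]
    have hQeq : (∑ i, d i * (β i / d i) ^ 2) = S := by
      rw [hS]
      refine Finset.sum_congr rfl fun i _ => ?_
      have h0 : d i ≠ 0 := ne_of_gt (hd_pos i)
      field_simp
      rw [mul_comm, mul_div_assoc, show d i / (1 - β i ^ 2) = 1 from div_self h0, mul_one]
    rw [hQeq]
    rw [div_eq_div_iff (by nlinarith) (ne_of_gt hS1_pos)]
    ring
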